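/- With ‖A‖_∂ = max{Tr(Aᵀ∂h) : ‖h‖_* ≤ 1} for a symmetric norm ‖·‖ on ℝⁿ, the module inequalities ‖(∂f)·g‖_∂ ≤ ‖g‖_∞ ‖∂f‖_∂ and ‖g·(∂f)‖_∂ ≤ ‖g‖_∞ ‖∂f‖_∂ hold for all f, g ∈ ℝⁿ, where (∂f)_{ij} = (fᵢ−fⱼ)/√(2n), ((∂f)·g)_{ij} = gⱼ(∂f)_{ij}, and (g·∂f)_{ij} = gᵢ(∂f)_{ij}. -/

import Mathlib

open Finset

/-- The symmetric matrix `Θ_x`: off-diagonal entries `(xᵢ+xⱼ)/(2n)`, diagonal chosen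
so that every row sums to zero. -/
noncomputable def Theta (n : ℕ) (x : Fin n → ℝ) : Matrix (Fin n) (Fin n) ℝ :=
  fun i j =>
    if i = j then -(∑ k ∈ Finset.univ.erase i, (x i + x k) / (2 * n))
    else (x i + x j) / (2 * n)

/-- `I_x = Iₙ + Θ_x`. -/
noncomputable def Imat (n : ℕ) (x : Fin n → ℝ) : Matrix (Fin n) (Fin n) ℝ :=
  1 + Theta n x

/-- `E f`: the constant vector whose entries all equal the mean of `f`. -/
noncomputable def meanVec (n : ℕ) (f : Fin n → ℝ) : Fin n → ℝ :=
  fun _ => (∑ i, f i) / n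

/-- The sup norm `‖x‖_∞`. -/
noncomputable def linf (n : ℕ) (x : Fin n → ℝ) : ℝ :=
  sSup (Set.range fun i => |x i|)

/-- The Ky Fan `k`-norm: the sum of the `k` largest absolute values of the entries,
i.e. the maximum of `∑_{i ∈ S} |xᵢ|` over subsets `S` of cardinality `k`. -/
noncomputable def kyFan (n k : ℕ) (x : Fin n → ℝ) : ℝ :=
  sSup ((fun S : Finset (Fin n) => ∑ i ∈ S, |x i|) '' {S | S.card = k})

/-- The dual Ky Fan `k`-norm: `max(‖x‖_∞, ‖x‖₁ / k)`. -/
noncomputable def kyFanDual (n k : ℕ) (x : Fin n → ℝ) : ℝ :=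
  max (linf n x) ((∑ i, |x i|) / k)

/-- A symmetric norm on `ℝⁿ`: a norm invariant under coordinate permutations
and sign changes. -/
structure IsSymmNorm (n : ℕ) (N : (Fin n → ℝ) → ℝ) : Prop where
  add_le : ∀ x y, N (x + y) ≤ N x + N y
  smul : ∀ (c : ℝ) (x), N (c • x) = |c| * N x
  pos : ∀ x, x ≠ 0 → 0 < N x
  perm : ∀ (σ : Equiv.Perm (Fin n)) (x), N (x ∘ σ) = N x
  sign : ∀ (ε x : Fin n → ℝ), (∀ i, ε i = 1 ∨ ε i = -1) → N (ε * x) = N x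

/-- The derivation `∂f = (f ⊗ 𝟏 − 𝟏 ⊗ f)/√(2n)`, i.e. `(∂f)_{ij} = (fᵢ − fⱼ)/√(2n)`. -/
noncomputable def Dmat (n : ℕ) (f : Fin n → ℝ) : Matrix (Fin n) (Fin n) ℝ :=
  fun i j => (f i - f j) / Real.sqrt (2 * n)

/-- The dual norm of `N`: `‖x‖_* = sup { ⟨x, y⟩ : N y ≤ 1 }`. -/
noncomputable def dualN (n : ℕ) (N : (Fin n → ℝ) → ℝ) (x : Fin n → ℝ) : ℝ :=
  sSup {t | ∃ y, N y ≤ 1 ∧ t = ∑ i, x i * y i}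

/-- The seminorm `‖A‖_∂ = max { Tr(Aᵀ ∂h) : ‖h‖_* ≤ 1 }` on `Mₙ(ℝ)`. -/
noncomputable def dnorm (n : ℕ) (N : (Fin n → ℝ) → ℝ) (A : Matrix (Fin n) (Fin n) ℝ) : ℝ :=
  sSup {t | ∃ h, dualN n N h ≤ 1 ∧ t = ∑ i, ∑ j, A i j * Dmat n h i j}

/-! ### Auxiliary lemmas about symmetric norms -/

section AuxNorm

variable {n : ℕ} {N : (Fin n → ℝ) → ℝ}

lemma IsSymmNorm.zero' (hN : IsSymmNorm n N) : N 0 = 0 := by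
  have h := hN.smul 0 0
  simpa using h

lemma IsSymmNorm.nonneg (hN : IsSymmNorm n N) (x : Fin n → ℝ) : 0 ≤ N x := by
  rcases eq_or_ne x 0 with rfl | h
  · rw [hN.zero']
  · exact (hN.pos x h).le

lemma IsSymmNorm.neg' (hN : IsSymmNorm n N) (x : Fin n → ℝ) : N (-x) = N x := by
  have h := hN.smul (-1) x
  simpa using h

lemma IsSymmNorm.smul_fun (hN : IsSymmNorm n N) (c : ℝ) (x : Fin n → ℝ) :
    N (fun i => c * x i) = |c| * N x := by
  have h : (fun i => c * x i) = c • x := rfl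
  rw [h, hN.smul]

lemma IsSymmNorm.two_term (hN : IsSymmNorm n N) (a b : ℝ) (u v : Fin n → ℝ) :
    N (fun i => a * u i + b * v i) ≤ |a| * N u + |b| * N v := by
  have h : (fun i => a * u i + b * v i) = (fun i => a * u i) + (fun i => b * v i) := rfl
  rw [h]
  refine (hN.add_le _ _).trans ?_
  rw [hN.smul_fun, hN.smul_fun]

lemma IsSymmNorm.sum_le (hN : IsSymmNorm n N) {α : Type*} (s : Finset α)
    (v : α → (Fin n → ℝ)) : N (∑ a ∈ s, v a) ≤ ∑ a ∈ s, N (v a) := by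
  classical
  induction s using Finset.cons_induction with
  | empty => simp [hN.zero']
  | cons a s ha ih =>
      rw [Finset.sum_cons, Finset.sum_cons]
      exact (hN.add_le _ _).trans (by linarith)

lemma IsSymmNorm.single_le (hN : IsSymmNorm n N) (y : Fin n → ℝ) (i : Fin n) :
    |y i| * N (fun k => if k = i then 1 else 0) ≤ N y := by
  classical
  set ε : Fin n → ℝ := fun k => if k = i then 1 else -1 with hε
  have hfun : (fun k => y i * (if k = i then (1:ℝ) else 0))
      = fun k => (1/2) * y k + (1/2) * ((ε * y) k) := by
    funext k
    simp only [hε, Pi.mul_apply]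
    by_cases h : k = i
    · subst h; rw [if_pos rfl, if_pos rfl]; ring
    · rw [if_neg h, if_neg h]; ring
  have h1 : N (fun k => y i * (if k = i then (1:ℝ) else 0))
      = |y i| * N (fun k => if k = i then (1:ℝ) else 0) := hN.smul_fun _ _
  rw [← h1, hfun]
  refine (hN.two_term _ _ _ _).trans ?_
  rw [hN.sign ε y (fun k => by by_cases h : k = i <;> simp [hε, h])]
  have := hN.nonneg y
  rw [abs_of_nonneg (by norm_num : (0:ℝ) ≤ 1/2)]
  linarith

lemma IsSymmNorm.single_pos (hN : IsSymmNorm n N) (i : Fin n) :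
    0 < N (fun k => if k = i then 1 else 0) := by
  apply hN.pos
  intro h
  have := congrFun h i
  simp at this

lemma IsSymmNorm.dual_bddAbove (hN : IsSymmNorm n N) (h : Fin n → ℝ) :
    BddAbove {t | ∃ y, N y ≤ 1 ∧ t = ∑ i, h i * y i} := by
  refine ⟨∑ i, |h i| / N (fun k => if k = i then 1 else 0), ?_⟩
  rintro t ⟨y, hy, rfl⟩
  calc ∑ i, h i * y i ≤ ∑ i, |h i| * |y i| := by
        refine Finset.sum_le_sum fun i _ => ?_
        rw [← abs_mul]; exact le_abs_self _
    _ ≤ ∑ i, |h i| / N (fun k => if k = i then 1 else 0) := by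
        refine Finset.sum_le_sum fun i _ => ?_
        have hp := hN.single_pos i
        have hyi : |y i| ≤ 1 / N (fun k => if k = i then 1 else 0) :=
          (le_div_iff₀ hp).mpr ((hN.single_le y i).trans hy)
        calc |h i| * |y i| ≤ |h i| * (1 / N (fun k => if k = i then 1 else 0)) :=
              mul_le_mul_of_nonneg_left hyi (abs_nonneg _)
          _ = |h i| / N (fun k => if k = i then 1 else 0) := by rw [mul_one_div]

lemma IsSymmNorm.dual_nonneg (hN : IsSymmNorm n N) (h : Fin n → ℝ) :
    0 ≤ dualN n N h := by
  refine le_csSup (hN.dual_bddAbove h) ?_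
  exact ⟨0, by simp [hN.zero'], by simp⟩

lemma IsSymmNorm.pair_le (hN : IsSymmNorm n N) (z h : Fin n → ℝ) :
    (∑ i, z i * h i) ≤ N z * dualN n N h := by
  rcases eq_or_ne z 0 with rfl | hz
  · simp [hN.zero']
  · have hNz := hN.pos z hz
    have hmem : (∑ i, h i * ((N z)⁻¹ * z i)) ∈
        {t | ∃ y, N y ≤ 1 ∧ t = ∑ i, h i * y i} := by
      refine ⟨fun i => (N z)⁻¹ * z i, ?_, rfl⟩
      rw [hN.smul_fun, abs_of_nonneg (inv_nonneg.mpr hNz.le), inv_mul_cancel₀ hNz.ne']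
    have hle := le_csSup (hN.dual_bddAbove h) hmem
    have heq : ∑ i, z i * h i = N z * ∑ i, h i * ((N z)⁻¹ * z i) := by
      rw [Finset.mul_sum]
      refine Finset.sum_congr rfl fun i _ => ?_
      field_simp
    rw [heq]
    exact mul_le_mul_of_nonneg_left hle hNz.le

end AuxNorm

/-! ### The vector `Tv g x = -Θ_g x` and algebraic identities -/

noncomputable def Tv (n : ℕ) (g x : Fin n → ℝ) : Fin n → ℝ :=
  fun i => (∑ j, (g i + g j) * (x j - x i)) / (2 * n)

section AuxAlg

variable {n : ℕ}

lemma sum_form (f g h : Fin n → ℝ) :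
    ∑ i, ∑ j, (f i - f j) * g j * (h i - h j)
      = (∑ i, f i * h i) * (∑ i, g i) - (∑ i, f i) * (∑ i, g i * h i)
        - (∑ i, f i * g i) * (∑ i, h i) + n * ∑ i, f i * g i * h i := by
  have per : ∀ i, ∑ j, (f i - f j) * g j * (h i - h j)
      = f i * h i * (∑ j, g j) - f i * (∑ j, g j * h j)
        - h i * (∑ j, f j * g j) + (∑ j, f j * g j * h j) := by
    intro i
    calc ∑ j, (f i - f j) * g j * (h i - h j)
        = ∑ j, (f i * h i * g j - f i * (g j * h j) - h i * (f j * g j) + f j * g j * h j) :=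
          Finset.sum_congr rfl fun j _ => by ring
      _ = _ := by
          simp only [Finset.sum_add_distrib, Finset.sum_sub_distrib, ← Finset.mul_sum]
  rw [Finset.sum_congr rfl fun i _ => per i]
  simp only [Finset.sum_add_distrib, Finset.sum_sub_distrib, ← Finset.sum_mul,
    Finset.sum_const, Finset.card_univ, Fintype.card_fin, nsmul_eq_mul]
  ring

lemma sum_form2 (f g h : Fin n → ℝ) :
    ∑ i, (∑ j, (g i + g j) * (f j - f i)) * h i
      = (∑ i, f i) * (∑ i, g i * h i) + (∑ i, f i * g i) * (∑ i, h i)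
        - n * (∑ i, f i * g i * h i) - (∑ i, g i) * (∑ i, f i * h i) := by
  have inner : ∀ i, ∑ j, (g i + g j) * (f j - f i)
      = g i * (∑ j, f j) + (∑ j, f j * g j) - (n : ℝ) * (f i * g i) - f i * (∑ j, g j) := by
    intro i
    calc ∑ j, (g i + g j) * (f j - f i)
        = ∑ j, (g i * f j + f j * g j - f i * g i - f i * g j) :=
          Finset.sum_congr rfl fun j _ => by ring
      _ = _ := by
          simp only [Finset.sum_add_distrib, Finset.sum_sub_distrib, ← Finset.mul_sum,
            Finset.sum_const, Finset.card_univ, Fintype.card_fin, nsmul_eq_mul]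
          ring
  have per : ∀ i, (∑ j, (g i + g j) * (f j - f i)) * h i
      = (g i * h i) * (∑ j, f j) + (∑ j, f j * g j) * h i
        - (n : ℝ) * (f i * g i * h i) - (∑ j, g j) * (f i * h i) := by
    intro i
    rw [inner i]
    ring
  rw [Finset.sum_congr rfl fun i _ => per i]
  simp only [Finset.sum_add_distrib, Finset.sum_sub_distrib, ← Finset.sum_mul,
    ← Finset.mul_sum]
  ring

lemma dmat_prod (hn : 0 < n) (f g h : Fin n → ℝ) (i j : Fin n) :
    Dmat n f i j * g j * Dmat n h i j = (f i - f j) * g j * (h i - h j) / (2 * n) := by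
  have hs : Real.sqrt (2 * n) * Real.sqrt (2 * n) = 2 * n :=
    Real.mul_self_sqrt (by positivity)
  show (f i - f j) / Real.sqrt (2 * n) * g j * ((h i - h j) / Real.sqrt (2 * n)) = _
  rw [div_mul_eq_mul_div, div_mul_div_comm, hs]

lemma key_id (hn : 0 < n) (f g h : Fin n → ℝ) :
    ∑ i, ∑ j, (Dmat n f i j * g j) * Dmat n h i j = ∑ i, (-(Tv n g f i)) * h i := by
  have lhs_eq : ∑ i, ∑ j, (Dmat n f i j * g j) * Dmat n h i j
      = (∑ i, ∑ j, (f i - f j) * g j * (h i - h j)) / (2 * n) := by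
    rw [Finset.sum_div]
    refine Finset.sum_congr rfl fun i _ => ?_
    rw [Finset.sum_div]
    exact Finset.sum_congr rfl fun j _ => dmat_prod hn f g h i j
  have rhs_eq : ∑ i, (-(Tv n g f i)) * h i
      = -((∑ i, (∑ j, (g i + g j) * (f j - f i)) * h i) / (2 * n)) := by
    have per : ∀ i, (-(Tv n g f i)) * h i
        = -((∑ j, (g i + g j) * (f j - f i)) * h i) / (2 * n) := by
      intro i
      show -((∑ j, (g i + g j) * (f j - f i)) / (2 * n)) * h i = _
      ring
    rw [Finset.sum_congr rfl fun i _ => per i, ← Finset.sum_div, Finset.sum_neg_distrib,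
      neg_div]
  rw [lhs_eq, rhs_eq, sum_form, sum_form2, ← neg_div]
  congr 1
  ring

lemma key_id_for_f (hn : 0 < n) (f h : Fin n → ℝ) :
    ∑ i, ∑ j, Dmat n f i j * Dmat n h i j = ∑ i, (f i - (∑ k, f k) / n) * h i := by
  have h1 : ∑ i, ∑ j, Dmat n f i j * Dmat n h i j
      = ∑ i, ∑ j, (Dmat n f i j * (fun _ : Fin n => (1:ℝ)) j) * Dmat n h i j :=
    Finset.sum_congr rfl fun i _ => Finset.sum_congr rfl fun j _ => by simp
  rw [h1, key_id hn f (fun _ => (1:ℝ)) h]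
  refine Finset.sum_congr rfl fun i _ => ?_
  have key : -(Tv n (fun _ => (1:ℝ)) f i) = f i - (∑ k, f k) / n := by
    show -((∑ j, ((1:ℝ) + 1) * (f j - f i)) / (2 * n)) = _
    have hsum : ∑ j, ((1:ℝ) + 1) * (f j - f i) = 2 * (∑ k, f k) - 2 * n * f i := by
      calc ∑ j, ((1:ℝ) + 1) * (f j - f i) = ∑ j, (2 * f j - 2 * f i) :=
            Finset.sum_congr rfl fun j _ => by ring
        _ = _ := by
          simp only [Finset.sum_sub_distrib, ← Finset.mul_sum, Finset.sum_const,
            Finset.card_univ, Fintype.card_fin, nsmul_eq_mul]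
          ring
    rw [hsum]
    have hn' : (n : ℝ) ≠ 0 := Nat.cast_ne_zero.mpr hn.ne'
    field_simp
    ring
  rw [key]

lemma Tv_shift (g f : Fin n → ℝ) (c : ℝ) :
    Tv n g (fun i => f i - c) = Tv n g f := by
  funext i
  show (∑ j, (g i + g j) * ((f j - c) - (f i - c))) / (2 * n)
      = (∑ j, (g i + g j) * (f j - f i)) / (2 * n)
  congr 1
  exact Finset.sum_congr rfl fun j _ => by ring

lemma Tv_comb (a b : ℝ) (u v x : Fin n → ℝ) :
    Tv n (fun i => a * u i + b * v i) x = fun i => a * Tv n u x i + b * Tv n v x i := by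
  funext i
  show (∑ j, ((a * u i + b * v i) + (a * u j + b * v j)) * (x j - x i)) / (2 * n)
      = a * ((∑ j, (u i + u j) * (x j - x i)) / (2 * n))
        + b * ((∑ j, (v i + v j) * (x j - x i)) / (2 * n))
  rw [mul_div_assoc', mul_div_assoc', ← add_div, Finset.mul_sum, Finset.mul_sum,
    ← Finset.sum_add_distrib]
  congr 1
  exact Finset.sum_congr rfl fun j _ => by ring

lemma Tv_smul (c : ℝ) (u x : Fin n → ℝ) :
    Tv n (fun i => c * u i) x = fun i => c * Tv n u x i := by
  have h2 : (fun i => c * u i + 0 * u i) = fun i => c * u i := by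
    funext i; ring
  have h := Tv_comb c 0 u u x
  rw [h2] at h
  rw [h]
  funext i
  ring

end AuxAlg

/-! ### linf lemmas -/

lemma abs_le_linf {n : ℕ} (g : Fin n → ℝ) (i : Fin n) : |g i| ≤ linf n g :=
  le_csSup (Set.Finite.bddAbove (Set.finite_range _)) ⟨i, rfl⟩

lemma linf_nonneg {n : ℕ} (hn : 0 < n) (g : Fin n → ℝ) : 0 ≤ linf n g :=
  (abs_nonneg _).trans (abs_le_linf g ⟨0, hn⟩)

/-! ### The combinatorial core: explicit convex decomposition by permutations -/

section Core

/-- Auxiliary: pick the `v`-th element of `P` (via `eqP`), or a default. -/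
noncomputable def Gfun {n p : ℕ} (P : Finset (Fin n)) (eqP : {i // i ∈ P} ≃ Fin p)
    (dflt : Fin n) (v : ℕ) : Fin n :=
  if h : v < p then ((eqP.symm ⟨v, h⟩ : {i // i ∈ P}) : Fin n) else dflt

/-- The `k`-th matching permutation between `P` and `Pᶜ`. -/
noncomputable def matchFun {n p m : ℕ} [NeZero m] (P : Finset (Fin n))
    (eqP : {i // i ∈ P} ≃ Fin p) (eqM : {i // i ∈ Pᶜ} ≃ ZMod m) (k : ZMod m)
    (i : Fin n) : Fin n :=
  if hP : i ∈ P then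
    ((eqM.symm ((((eqP ⟨i, hP⟩ : Fin p) : ℕ) : ZMod m) + k) : {i // i ∈ Pᶜ}) : Fin n)
  else Gfun P eqP i (eqM ⟨i, Finset.mem_compl.mpr hP⟩ - k).val

lemma matchFun_eq_P {n p m : ℕ} [NeZero m] (P : Finset (Fin n))
    (eqP : {i // i ∈ P} ≃ Fin p) (eqM : {i // i ∈ Pᶜ} ≃ ZMod m) (k : ZMod m)
    {i : Fin n} (hP : i ∈ P) :
    matchFun P eqP eqM k i
      = ((eqM.symm ((((eqP ⟨i, hP⟩ : Fin p) : ℕ) : ZMod m) + k) : {i // i ∈ Pᶜ}) : Fin n) := by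
  simp only [matchFun]
  rw [dif_pos hP]

lemma matchFun_eq_M {n p m : ℕ} [NeZero m] (P : Finset (Fin n))
    (eqP : {i // i ∈ P} ≃ Fin p) (eqM : {i // i ∈ Pᶜ} ≃ ZMod m) (k : ZMod m)
    {i : Fin n} (hP : i ∉ P) :
    matchFun P eqP eqM k i = Gfun P eqP i (eqM ⟨i, Finset.mem_compl.mpr hP⟩ - k).val := by
  simp only [matchFun]
  rw [dif_neg hP]

lemma matchFun_involutive {n p m : ℕ} [NeZero m] (P : Finset (Fin n))
    (eqP : {i // i ∈ P} ≃ Fin p) (eqM : {i // i ∈ Pᶜ} ≃ ZMod m) (hle : p ≤ m)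
    (k : ZMod m) : Function.Involutive (matchFun P eqP eqM k) := by
  intro i
  by_cases hP : i ∈ P
  · rw [matchFun_eq_P P eqP eqM k hP]
    set a : Fin p := eqP ⟨i, hP⟩ with ha
    have hjP : ((eqM.symm ((((a : ℕ)) : ZMod m) + k) : {i // i ∈ Pᶜ}) : Fin n) ∉ P :=
      Finset.mem_compl.mp (eqM.symm _).2
    rw [matchFun_eq_M P eqP eqM k hjP]
    have h1 : (⟨((eqM.symm ((((a : ℕ)) : ZMod m) + k) : {i // i ∈ Pᶜ}) : Fin n),
        Finset.mem_compl.mpr hjP⟩ : {i // i ∈ Pᶜ}) = eqM.symm ((((a : ℕ)) : ZMod m) + k) :=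
      Subtype.ext rfl
    rw [h1, Equiv.apply_symm_apply]
    have h2 : ((((a : ℕ)) : ZMod m) + k) - k = (((a : ℕ)) : ZMod m) := by ring
    rw [h2]
    have h3 : ((((a : ℕ)) : ZMod m)).val = (a : ℕ) :=
      ZMod.val_natCast_of_lt (lt_of_lt_of_le a.2 hle)
    rw [h3]
    simp only [Gfun]
    rw [dif_pos a.2]
    have h4 : (⟨(a : ℕ), a.2⟩ : Fin p) = a := rfl
    rw [h4, ha, Equiv.symm_apply_apply]
  · rw [matchFun_eq_M P eqP eqM k hP]
    set b : ZMod m := eqM ⟨i, Finset.mem_compl.mpr hP⟩ with hb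
    by_cases hv : (b - k).val < p
    · simp only [Gfun]
      rw [dif_pos hv]
      have hjP : ((eqP.symm ⟨(b - k).val, hv⟩ : {i // i ∈ P}) : Fin n) ∈ P :=
        (eqP.symm ⟨(b - k).val, hv⟩).2
      rw [matchFun_eq_P P eqP eqM k hjP]
      have h1 : (⟨((eqP.symm ⟨(b - k).val, hv⟩ : {i // i ∈ P}) : Fin n), hjP⟩ :
          {i // i ∈ P}) = eqP.symm ⟨(b - k).val, hv⟩ := Subtype.ext rfl
      rw [h1, Equiv.apply_symm_apply]
      have h2 : ((((⟨(b - k).val, hv⟩ : Fin p) : ℕ)) : ZMod m) = b - k :=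
        ZMod.natCast_zmod_val (b - k)
      rw [h2]
      have h3 : b - k + k = b := by ring
      rw [h3, hb, Equiv.symm_apply_apply]
    · simp only [Gfun]
      rw [dif_neg hv, matchFun_eq_M P eqP eqM k hP, ← hb]
      simp only [Gfun]
      rw [dif_neg hv]

/-- Sum over the matching family, at a point of `P`. -/
lemma matchFun_sum_P {n p m : ℕ} [NeZero m] (P : Finset (Fin n))
    (eqP : {i // i ∈ P} ≃ Fin p) (eqM : {i // i ∈ Pᶜ} ≃ ZMod m)
    (x : Fin n → ℝ) {i : Fin n} (hP : i ∈ P) :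
    ∑ k : ZMod m, x (matchFun P eqP eqM k i) = ∑ j ∈ Pᶜ, x j := by
  calc ∑ k : ZMod m, x (matchFun P eqP eqM k i)
      = ∑ k : ZMod m,
          x ((eqM.symm ((((eqP ⟨i, hP⟩ : Fin p) : ℕ) : ZMod m) + k) : {i // i ∈ Pᶜ}) : Fin n) :=
        Finset.sum_congr rfl fun k _ => by rw [matchFun_eq_P P eqP eqM k hP]
    _ = ∑ c : ZMod m, x ((eqM.symm c : {i // i ∈ Pᶜ}) : Fin n) :=
        Fintype.sum_equiv (Equiv.addLeft ((((eqP ⟨i, hP⟩ : Fin p) : ℕ)) : ZMod m)) _ _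
          (fun k => rfl)
    _ = ∑ j : {i // i ∈ Pᶜ}, x (j : Fin n) :=
        Equiv.sum_comp eqM.symm (fun j : {i // i ∈ Pᶜ} => x (j : Fin n))
    _ = ∑ j ∈ Pᶜ, x j := Finset.sum_coe_sort Pᶜ x

/-- Sum over the matching family, at a point of `Pᶜ`. -/
lemma matchFun_sum_M {n p m : ℕ} [NeZero m] (P : Finset (Fin n))
    (eqP : {i // i ∈ P} ≃ Fin p) (eqM : {i // i ∈ Pᶜ} ≃ ZMod m) (hle : p ≤ m)
    (x : Fin n → ℝ) {i : Fin n} (hP : i ∉ P) :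
    ∑ k : ZMod m, x (matchFun P eqP eqM k i)
      = (∑ j ∈ P, x j) + ((m : ℝ) - p) * x i := by
  classical
  set b : ZMod m := eqM ⟨i, Finset.mem_compl.mpr hP⟩ with hb
  have step1 : ∑ k : ZMod m, x (matchFun P eqP eqM k i)
      = ∑ d : ZMod m, x (Gfun P eqP i d.val) := by
    calc ∑ k : ZMod m, x (matchFun P eqP eqM k i)
        = ∑ k : ZMod m, x (Gfun P eqP i (b - k).val) :=
          Finset.sum_congr rfl fun k _ => by rw [matchFun_eq_M P eqP eqM k hP, ← hb]
      _ = ∑ d : ZMod m, x (Gfun P eqP i d.val) :=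
          Fintype.sum_equiv (Equiv.subLeft b) _ _ (fun k => rfl)
  rw [step1]
  have step2 : ∀ d : ZMod m, x (Gfun P eqP i d.val)
      = if d.val < p then x (Gfun P eqP i d.val) else x i := by
    intro d
    by_cases hd : d.val < p
    · rw [if_pos hd]
    · rw [if_neg hd]
      simp only [Gfun]
      rw [dif_neg hd]
  rw [Finset.sum_congr rfl fun d _ => step2 d, Finset.sum_ite]
  have himg : Finset.univ.filter (fun d : ZMod m => d.val < p)
      = Finset.image (fun a : Fin p => (((a : ℕ)) : ZMod m)) Finset.univ := by
    ext d
    simp only [Finset.mem_filter, Finset.mem_univ, true_and, Finset.mem_image]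
    constructor
    · intro hd
      exact ⟨⟨d.val, hd⟩, ZMod.natCast_zmod_val d⟩
    · rintro ⟨a, rfl⟩
      rw [ZMod.val_natCast_of_lt (lt_of_lt_of_le a.2 hle)]
      exact a.2
  have hinj : Function.Injective (fun a : Fin p => (((a : ℕ)) : ZMod m)) := by
    intro a a' haa
    have haa' : (((a : ℕ)) : ZMod m) = (((a' : ℕ)) : ZMod m) := haa
    have h1 : ((((a : ℕ)) : ZMod m)).val = (a : ℕ) :=
      ZMod.val_natCast_of_lt (lt_of_lt_of_le a.2 hle)
    have h2 : ((((a' : ℕ)) : ZMod m)).val = (a' : ℕ) :=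
      ZMod.val_natCast_of_lt (lt_of_lt_of_le a'.2 hle)
    apply Fin.ext
    rw [← h1, ← h2, haa']
  have hsum1 : ∑ d ∈ Finset.univ.filter (fun d : ZMod m => d.val < p),
      x (Gfun P eqP i d.val) = ∑ j ∈ P, x j := by
    rw [himg, Finset.sum_image (fun a _ a' _ h => hinj h)]
    have hterm : ∀ a : Fin p,
        x (Gfun P eqP i ((((a : ℕ)) : ZMod m)).val) = x ((eqP.symm a : {i // i ∈ P}) : Fin n) := by
      intro a
      have h1 : ((((a : ℕ)) : ZMod m)).val = (a : ℕ) :=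
        ZMod.val_natCast_of_lt (lt_of_lt_of_le a.2 hle)
      rw [h1]
      simp only [Gfun]
      rw [dif_pos a.2]
    rw [Finset.sum_congr rfl fun a _ => hterm a,
      Equiv.sum_comp eqP.symm (fun j : {i // i ∈ P} => x (j : Fin n))]
    exact Finset.sum_coe_sort P x
  have hcard : (Finset.univ.filter (fun d : ZMod m => ¬ d.val < p)).card = m - p := by
    have htot := Finset.card_filter_add_card_filter_not
      (s := (Finset.univ : Finset (ZMod m))) (p := fun d : ZMod m => d.val < p)
    have hc1 : (Finset.univ.filter (fun d : ZMod m => d.val < p)).card = p := by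
      rw [himg, Finset.card_image_of_injective _ hinj, Finset.card_univ, Fintype.card_fin]
    rw [Finset.card_univ, ZMod.card] at htot
    omega
  rw [hsum1, Finset.sum_const, hcard, nsmul_eq_mul, Nat.cast_sub hle]

/-- The core lemma: the explicitly averaged vector has norm at most `N x`. -/
lemma core_lemma {n : ℕ} (hn : 0 < n) {N : (Fin n → ℝ) → ℝ} (hN : IsSymmNorm n N)
    (x : Fin n → ℝ) (P : Finset (Fin n)) (hle : P.card ≤ Pᶜ.card) :
    N (fun i => (if i ∈ P then ((P.card : ℝ) * x i + ∑ j ∈ Pᶜ, x j)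
      else ((Pᶜ.card : ℝ) * x i + ∑ j ∈ P, x j)) / n) ≤ N x := by
  classical
  have hpm : P.card + Pᶜ.card = n := by
    simpa using P.card_add_card_compl
  have hm0 : 0 < Pᶜ.card := by omega
  haveI : NeZero Pᶜ.card := ⟨hm0.ne'⟩
  let eqP : {i // i ∈ P} ≃ Fin P.card := Fintype.equivFinOfCardEq (Fintype.card_coe P)
  let eqM : {i // i ∈ Pᶜ} ≃ ZMod Pᶜ.card :=
    Fintype.equivOfCardEq (by rw [Fintype.card_coe, ZMod.card])
  have hnR : (n : ℝ) ≠ 0 := Nat.cast_ne_zero.mpr hn.ne'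
  have keyfun : (fun i => (if i ∈ P then ((P.card : ℝ) * x i + ∑ j ∈ Pᶜ, x j)
      else ((Pᶜ.card : ℝ) * x i + ∑ j ∈ P, x j)) / n)
      = (fun i => ((P.card : ℝ)/n) * x i)
        + ∑ k : ZMod Pᶜ.card, (fun i => (1/(n:ℝ)) * x (matchFun P eqP eqM k i)) := by
    funext i
    rw [Pi.add_apply, Finset.sum_apply, ← Finset.mul_sum]
    by_cases hP : i ∈ P
    · rw [if_pos hP, matchFun_sum_P P eqP eqM x hP]
      field_simp
    · rw [if_neg hP, matchFun_sum_M P eqP eqM hle x hP]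
      have hmp : ((Pᶜ.card : ℝ)) = (P.card : ℝ) + ((Pᶜ.card : ℝ) - P.card) := by ring
      field_simp
      ring
  rw [keyfun]
  have hperm : ∀ k : ZMod Pᶜ.card, N (fun i => x (matchFun P eqP eqM k i)) = N x := by
    intro k
    have hinv := matchFun_involutive P eqP eqM hle k
    exact hN.perm ⟨matchFun P eqP eqM k, matchFun P eqP eqM k,
      hinv.leftInverse, hinv.rightInverse⟩ x
  calc N ((fun i => ((P.card : ℝ)/n) * x i)
        + ∑ k : ZMod Pᶜ.card, (fun i => (1/(n:ℝ)) * x (matchFun P eqP eqM k i)))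
      ≤ N (fun i => ((P.card : ℝ)/n) * x i)
        + N (∑ k : ZMod Pᶜ.card, (fun i => (1/(n:ℝ)) * x (matchFun P eqP eqM k i))) :=
        hN.add_le _ _
    _ ≤ ((P.card : ℝ)/n) * N x
        + ∑ k : ZMod Pᶜ.card, N (fun i => (1/(n:ℝ)) * x (matchFun P eqP eqM k i)) := by
        rw [hN.smul_fun, abs_of_nonneg (by positivity)]
        exact add_le_add (le_refl _) (hN.sum_le _ _)
    _ = ((P.card : ℝ)/n) * N x + ∑ _k : ZMod Pᶜ.card, (1/(n:ℝ)) * N x := by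
        congr 1
        refine Finset.sum_congr rfl fun k _ => ?_
        rw [hN.smul_fun, abs_of_nonneg (by positivity), hperm k]
    _ = N x := by
        rw [Finset.sum_const, Finset.card_univ, ZMod.card, nsmul_eq_mul]
        have hc : ((P.card : ℝ) + (Pᶜ.card : ℝ)) = (n : ℝ) := by exact_mod_cast hpm
        have hsimp : ((P.card : ℝ))/n * N x + (Pᶜ.card : ℝ) * (1/n * N x)
            = (((P.card : ℝ) + (Pᶜ.card : ℝ))/n) * N x := by ring
        rw [hsimp, hc, div_self hnR, one_mul]

end Core

/-! ### The sign-vector case -/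

lemma eps_case {n : ℕ} (hn : 0 < n) {N : (Fin n → ℝ) → ℝ} (hN : IsSymmNorm n N)
    (x ε : Fin n → ℝ) (hx : ∑ i, x i = 0) (hε : ∀ i, ε i = 1 ∨ ε i = -1) :
    N (Tv n ε x) ≤ N x := by
  classical
  set P : Finset (Fin n) := Finset.univ.filter (fun i => ε i = 1) with hPdef
  have hmem : ∀ i, i ∈ P ↔ ε i = 1 := fun i => by simp [hPdef]
  have hneg : ∀ i, i ∉ P → ε i = -1 := fun i h =>
    (hε i).resolve_left (by simpa [hmem] using h)
  have hsplit : ∑ j ∈ P, x j = - ∑ j ∈ Pᶜ, x j := by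
    have h := Finset.sum_add_sum_compl P x
    rw [hx] at h
    linarith
  have hnR : (n : ℝ) ≠ 0 := Nat.cast_ne_zero.mpr hn.ne'
  have hTv : Tv n ε x = (fun i => if i ∈ P then (-1:ℝ) else 1)
      * (fun i => (if i ∈ P then ((P.card : ℝ) * x i + ∑ j ∈ Pᶜ, x j)
          else ((Pᶜ.card : ℝ) * x i + ∑ j ∈ P, x j)) / n) := by
    funext i
    rw [Pi.mul_apply]
    show (∑ j, (ε i + ε j) * (x j - x i)) / (2*n) = _
    have hsum : ∑ j, (ε i + ε j) * (x j - x i)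
        = ∑ j ∈ P, (ε i + ε j) * (x j - x i) + ∑ j ∈ Pᶜ, (ε i + ε j) * (x j - x i) :=
      (Finset.sum_add_sum_compl P _).symm
    by_cases hP : i ∈ P
    · have hεi := (hmem i).mp hP
      rw [if_pos hP, if_pos hP]
      have e1 : ∑ j ∈ P, (ε i + ε j) * (x j - x i) = ∑ j ∈ P, (2 * x j - 2 * x i) :=
        Finset.sum_congr rfl fun j hj => by rw [hεi, (hmem j).mp hj]; ring
      have e2 : ∑ j ∈ Pᶜ, (ε i + ε j) * (x j - x i) = 0 :=
        Finset.sum_eq_zero fun j hj => by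
          rw [hεi, hneg j (Finset.mem_compl.mp hj)]; ring
      rw [hsum, e1, e2, add_zero, Finset.sum_sub_distrib, Finset.sum_const, nsmul_eq_mul]
      have e3 : ∑ j ∈ P, 2 * x j = 2 * ∑ j ∈ P, x j := by rw [Finset.mul_sum]
      rw [e3, hsplit]
      field_simp
      ring
    · have hεi := hneg i hP
      rw [if_neg hP, if_neg hP]
      have e1 : ∑ j ∈ P, (ε i + ε j) * (x j - x i) = 0 :=
        Finset.sum_eq_zero fun j hj => by rw [hεi, (hmem j).mp hj]; ring
      have e2 : ∑ j ∈ Pᶜ, (ε i + ε j) * (x j - x i) = ∑ j ∈ Pᶜ, (2 * x i - 2 * x j) :=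
        Finset.sum_congr rfl fun j hj => by
          rw [hεi, hneg j (Finset.mem_compl.mp hj)]; ring
      rw [hsum, e1, e2, zero_add, Finset.sum_sub_distrib, Finset.sum_const, nsmul_eq_mul]
      have e3 : ∑ j ∈ Pᶜ, 2 * x j = 2 * ∑ j ∈ Pᶜ, x j := by rw [Finset.mul_sum]
      have hsplit' : ∑ j ∈ Pᶜ, x j = - ∑ j ∈ P, x j := by linarith
      rw [e3, hsplit']
      field_simp
      ring
  rw [hTv, hN.sign _ _ (fun i => by by_cases h : i ∈ P <;> simp [h])]
  by_cases hc : P.card ≤ Pᶜ.card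
  · exact core_lemma hn hN x P hc
  · have hc2 : Pᶜ.card ≤ Pᶜᶜ.card := by rw [compl_compl]; omega
    have h := core_lemma hn hN x Pᶜ hc2
    have hw : (fun i => (if i ∈ Pᶜ then ((Pᶜ.card : ℝ) * x i + ∑ j ∈ Pᶜᶜ, x j)
        else ((Pᶜᶜ.card : ℝ) * x i + ∑ j ∈ Pᶜ, x j)) / n)
        = (fun i => (if i ∈ P then ((P.card : ℝ) * x i + ∑ j ∈ Pᶜ, x j)
          else ((Pᶜ.card : ℝ) * x i + ∑ j ∈ P, x j)) / n) := by
      funext i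
      rw [compl_compl]
      by_cases hP : i ∈ P
      · rw [if_neg (by simp [Finset.mem_compl, hP]), if_pos hP]
      · rw [if_pos (Finset.mem_compl.mpr hP), if_neg hP]
    rw [← hw]
    exact h

/-! ### The hypercube reduction -/

lemma hyper {n : ℕ} (hn : 0 < n) {N : (Fin n → ℝ) → ℝ} (hN : IsSymmNorm n N)
    (x : Fin n → ℝ) (hx : ∑ i, x i = 0) (c : ℝ) (hc : 0 ≤ c) (g : Fin n → ℝ)
    (hg : ∀ i, |g i| ≤ c) : N (Tv n g x) ≤ c * N x := by
  classical
  rcases hc.eq_or_lt with hc0 | hcpos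
  · have hg0 : ∀ i, g i = 0 := fun i =>
      abs_eq_zero.mp (le_antisymm (hc0 ▸ hg i) (abs_nonneg _))
    have hTv0 : Tv n g x = 0 := by
      funext i
      show (∑ j, (g i + g j) * (x j - x i)) / (2*n) = (0 : Fin n → ℝ) i
      rw [Finset.sum_eq_zero fun j _ => by rw [hg0 i, hg0 j]; ring, zero_div]
      simp
    rw [hTv0, hN.zero', ← hc0, zero_mul]
  · have main : ∀ (T : Finset (Fin n)) (g : Fin n → ℝ), (∀ i, |g i| ≤ c) →
        (∀ i, i ∉ T → g i = c ∨ g i = -c) → N (Tv n g x) ≤ c * N x := by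
      intro T
      induction T using Finset.induction_on with
      | empty =>
          intro g hg1 hg2
          have hζ : ∀ i, g i / c = 1 ∨ g i / c = -1 := by
            intro i
            rcases hg2 i (Finset.notMem_empty i) with h | h
            · left; rw [h, div_self hcpos.ne']
            · right; rw [h, neg_div, div_self hcpos.ne']
          have hgc : g = fun i => c * (g i / c) := by
            funext i; field_simp
          have hTv : Tv n g x = fun i => c * Tv n (fun i => g i / c) x i := by
            conv_lhs => rw [hgc]
            exact Tv_smul c _ x
          rw [hTv, hN.smul_fun, abs_of_nonneg hc]
          exact mul_le_mul_of_nonneg_left (eps_case hn hN x _ hx hζ) hc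
      | @insert a T ha ih =>
          intro g hg1 hg2
          have habs := abs_le.mp (hg1 a)
          set lam := (c + g a) / (2 * c) with hlam
          have hla0 : 0 ≤ lam := by
            apply div_nonneg
            · linarith [habs.1]
            · linarith
          have hla1 : lam ≤ 1 := by
            rw [hlam, div_le_one (by linarith)]
            linarith [habs.2]
          set gp := Function.update g a c with hgp
          set gm := Function.update g a (-c) with hgm
          have hdec : g = fun i => lam * gp i + (1 - lam) * gm i := by
            funext i
            by_cases hi : i = a
            · subst hi
              rw [hgp, hgm, Function.update_self, Function.update_self, hlam]
              field_simp
              ring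
            · rw [hgp, hgm, Function.update_of_ne hi, Function.update_of_ne hi]
              ring
          have hTv : Tv n g x = fun i => lam * Tv n gp x i + (1-lam) * Tv n gm x i := by
            conv_lhs => rw [hdec]
            exact Tv_comb _ _ _ _ x
          have hbp : N (Tv n gp x) ≤ c * N x := by
            refine ih gp (fun i => ?_) (fun i hi => ?_)
            · by_cases hi : i = a
              · subst hi
                rw [hgp, Function.update_self, abs_of_nonneg hc]
              · rw [hgp, Function.update_of_ne hi]
                exact hg1 i
            · by_cases hia : i = a
              · subst hia
                left
                rw [hgp, Function.update_self]
              · rw [hgp, Function.update_of_ne hia]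
                exact hg2 i (by simp [Finset.mem_insert, hia, hi])
          have hbm : N (Tv n gm x) ≤ c * N x := by
            refine ih gm (fun i => ?_) (fun i hi => ?_)
            · by_cases hi : i = a
              · subst hi
                rw [hgm, Function.update_self, abs_neg, abs_of_nonneg hc]
              · rw [hgm, Function.update_of_ne hi]
                exact hg1 i
            · by_cases hia : i = a
              · subst hia
                right
                rw [hgm, Function.update_self]
              · rw [hgm, Function.update_of_ne hia]
                exact hg2 i (by simp [Finset.mem_insert, hia, hi])
          rw [hTv]
          refine (hN.two_term lam (1-lam) _ _).trans ?_
          rw [abs_of_nonneg hla0, abs_of_nonneg (by linarith)]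
          calc lam * N (Tv n gp x) + (1-lam) * N (Tv n gm x)
              ≤ lam * (c * N x) + (1-lam) * (c * N x) :=
                add_le_add (mul_le_mul_of_nonneg_left hbp hla0)
                  (mul_le_mul_of_nonneg_left hbm (by linarith))
            _ = c * N x := by ring
    exact main Finset.univ g hg (fun i hi => absurd (Finset.mem_univ i) hi)

/-- Type synonym carrying the symmetric norm as a normed-space structure. -/
def Vs (n : ℕ) : Type := Fin n → ℝ

theorem stmt_15 (n : ℕ) (hn : 0 < n) (N : (Fin n → ℝ) → ℝ) (hN : IsSymmNorm n N)
    (f g : Fin n → ℝ) :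
    dnorm n N (fun i j => Dmat n f i j * g j) ≤ linf n g * dnorm n N (Dmat n f) ∧
      dnorm n N (fun i j => g i * Dmat n f i j) ≤ linf n g * dnorm n N (Dmat n f) := by
  classical
  set x : Fin n → ℝ := fun i => f i - (∑ k, f k) / n with hxdef
  have hnR : (n : ℝ) ≠ 0 := Nat.cast_ne_zero.mpr hn.ne'
  have hx0 : ∑ i, x i = 0 := by
    rw [hxdef, Finset.sum_sub_distrib, Finset.sum_const, Finset.card_univ, Fintype.card_fin,
      nsmul_eq_mul]
    field_simp
    ring
  have hcnn : 0 ≤ linf n g := linf_nonneg hn g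
  have idf : ∀ h : Fin n → ℝ, ∑ i, ∑ j, Dmat n f i j * Dmat n h i j = ∑ i, x i * h i := by
    intro h
    rw [key_id_for_f hn f h]
  have hDbdd : BddAbove {t | ∃ h, dualN n N h ≤ 1 ∧
      t = ∑ i, ∑ j, Dmat n f i j * Dmat n h i j} := by
    refine ⟨N x, ?_⟩
    rintro t ⟨h, hh, rfl⟩
    rw [idf h]
    calc ∑ i, x i * h i ≤ N x * dualN n N h := hN.pair_le x h
      _ ≤ N x * 1 := mul_le_mul_of_nonneg_left hh (hN.nonneg x)
      _ = N x := mul_one _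
  have dual0 : dualN n N 0 ≤ 1 := by
    have hset : {t | ∃ y, N y ≤ 1 ∧ t = ∑ i, (0 : Fin n → ℝ) i * y i} = {0} := by
      ext t
      simp only [Set.mem_setOf_eq, Set.mem_singleton_iff]
      constructor
      · rintro ⟨y, _, rfl⟩; simp
      · rintro rfl; exact ⟨0, by simp [hN.zero'], by simp⟩
    rw [dualN, hset, csSup_singleton]
    norm_num
  have hmem0 : (0 : ℝ) ∈ {t | ∃ h, dualN n N h ≤ 1 ∧
      t = ∑ i, ∑ j, Dmat n f i j * Dmat n h i j} := by
    refine ⟨0, dual0, ?_⟩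
    have : ∀ i j : Fin n, Dmat n (0 : Fin n → ℝ) i j = 0 := by
      intro i j
      show ((0 : Fin n → ℝ) i - (0 : Fin n → ℝ) j) / Real.sqrt (2*n) = 0
      simp
    simp [this]
  have hD0 : 0 ≤ dnorm n N (Dmat n f) := le_csSup hDbdd hmem0
  -- bipolar: N x ≤ dnorm (Dmat f)
  have hbip : N x ≤ dnorm n N (Dmat n f) := by
    rcases eq_or_ne x 0 with hx | hx
    · rw [hx, hN.zero']
      exact hD0
    · letI : AddCommGroup (Vs n) := Pi.addCommGroup
      letI : Module ℝ (Vs n) := Pi.module _ _ _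
      letI : NormedAddCommGroup (Vs n) := AddGroupNorm.toNormedAddCommGroup
        { toFun := fun y => N y
          map_zero' := hN.zero'
          add_le' := hN.add_le
          neg' := hN.neg'
          eq_zero_of_map_eq_zero' := fun y hy => by
            by_contra hne
            exact absurd hy (ne_of_gt (hN.pos y hne)) }
      letI : NormedSpace ℝ (Vs n) :=
        { norm_smul_le := fun c y => by
            show N (c • y) ≤ ‖c‖ * N y
            rw [Real.norm_eq_abs]
            exact le_of_eq (hN.smul c y) }
      obtain ⟨G, hG1, hGx⟩ := exists_dual_vector ℝ (show Vs n from x) (ne_of_gt (hN.pos x hx))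
      set hstar : Fin n → ℝ := fun i => G (show Vs n from fun k => if i = k then 1 else 0)
        with hstardef
      have hGsum : ∀ y : Fin n → ℝ, (∑ i, y i * hstar i) = G (show Vs n from y) := by
        intro y
        have hrep : (show Vs n from y)
            = ∑ i, y i • (show Vs n from fun k => if i = k then (1:ℝ) else 0) :=
          pi_eq_sum_univ y
        rw [hrep, map_sum]
        refine Finset.sum_congr rfl fun i _ => ?_
        rw [map_smul, smul_eq_mul, hstardef]
        rw [← hrep]
      have hdual : dualN n N hstar ≤ 1 := by
        refine Real.sSup_le ?_ zero_le_one
        rintro t ⟨y, hy, rfl⟩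
        have hcomm : (∑ i, hstar i * y i) = ∑ i, y i * hstar i :=
          Finset.sum_congr rfl fun i _ => mul_comm _ _
        rw [hcomm, hGsum y]
        calc G (show Vs n from y) ≤ ‖G (show Vs n from y)‖ := le_abs_self _
          _ ≤ ‖G‖ * ‖(show Vs n from y)‖ := G.le_opNorm _
          _ = N y := by rw [hG1, one_mul]; rfl
          _ ≤ 1 := hy
      have hval : (∑ i, ∑ j, Dmat n f i j * Dmat n hstar i j) = N x := by
        rw [idf hstar, hGsum x, hGx]
        rfl
      exact le_csSup hDbdd ⟨hstar, hdual, hval.symm⟩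
  -- the per-element bound
  have main : ∀ h : Fin n → ℝ, dualN n N h ≤ 1 →
      (∑ i, ∑ j, (Dmat n f i j * g j) * Dmat n h i j) ≤ linf n g * dnorm n N (Dmat n f) := by
    intro h hh
    rw [key_id hn f g h]
    have hTveq : N (Tv n g f) = N (Tv n g x) := by
      rw [hxdef, Tv_shift g f ((∑ k, f k) / n)]
    calc ∑ i, (-(Tv n g f i)) * h i
        ≤ N (fun i => -(Tv n g f i)) * dualN n N h := hN.pair_le _ h
      _ ≤ N (fun i => -(Tv n g f i)) * 1 :=
          mul_le_mul_of_nonneg_left hh (hN.nonneg _)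
      _ = N (Tv n g f) := by rw [mul_one]; exact hN.neg' (Tv n g f)
      _ = N (Tv n g x) := hTveq
      _ ≤ linf n g * N x := hyper hn hN x hx0 (linf n g) hcnn g (abs_le_linf g)
      _ ≤ linf n g * dnorm n N (Dmat n f) := mul_le_mul_of_nonneg_left hbip hcnn
  constructor
  · refine Real.sSup_le ?_ (mul_nonneg hcnn hD0)
    rintro t ⟨h, hh, rfl⟩
    exact main h hh
  · refine Real.sSup_le ?_ (mul_nonneg hcnn hD0)
    rintro t ⟨h, hh, rfl⟩
    have hswap : ∑ i, ∑ j, (g i * Dmat n f i j) * Dmat n h i j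
        = ∑ i, ∑ j, (Dmat n f i j * g j) * Dmat n h i j := by
      rw [Finset.sum_comm]
      refine Finset.sum_congr rfl fun i _ => Finset.sum_congr rfl fun j _ => ?_
      show g j * Dmat n f j i * Dmat n h j i = Dmat n f i j * g j * Dmat n h i j
      show g j * ((f j - f i) / Real.sqrt (2*n)) * ((h j - h i) / Real.sqrt (2*n))
          = (f i - f j) / Real.sqrt (2*n) * g j * ((h i - h j) / Real.sqrt (2*n))
      ring
    calc ∑ i, ∑ j, (g i * Dmat n f i j) * Dmat n h i j
        = ∑ i, ∑ j, (Dmat n f i j * g j) * Dmat n h i j := hswap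
      _ ≤ linf n g * dnorm n N (Dmat n f) := main h hh
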